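/- arXiv:1511.06473 — 2 statements merged into one kernel-verified Lean document; each statement's English description precedes it below -/
import Mathlib

section
/- Let A ⊆ B be an apparently fragile integral ring extension. Assume there is a minimal prime p of A such that (1) only finitely many primes of B lie over p, and (2) for every minimal prime q of A other than p, exactly one prime of B contracts to q. Then pB = p (i.e., p is an ideal of B), and the extension A ⊆ B is globally fragile. -/
/-- A ring homomorphism `f : A →+* B` satisfies going-down: whenever `p₁ ⊆ p₂` are primes of `A`
and `Q₂` is a prime of `B` contracting to `p₂`, there is a prime `Q₁ ⊆ Q₂` of `B`
contracting to `p₁`. -/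
def GoingDownHom {A B : Type*} [CommRing A] [CommRing B] (f : A →+* B) : Prop :=
  ∀ (p₁ p₂ : Ideal A), p₁.IsPrime → p₂.IsPrime → p₁ ≤ p₂ →
    ∀ Q₂ : Ideal B, Q₂.IsPrime → Q₂.comap f = p₂ →
      ∃ Q₁ : Ideal B, Q₁.IsPrime ∧ Q₁ ≤ Q₂ ∧ Q₁.comap f = p₁

/-- The canonical map from the localization of a subring `A ⊆ B` at a submonoid `W ⊆ A`
to the localization of `B` at the image of `W` in `B`. -/
noncomputable def locMap {B : Type*} [CommRing B] (A : Subring B) (W : Submonoid A) :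
    Localization W →+* Localization (W.map A.subtype) :=
  IsLocalization.lift (M := W) (S := Localization W)
    (g := (algebraMap B (Localization (W.map A.subtype))).comp A.subtype)
    (fun y => IsLocalization.map_units (M := W.map A.subtype) (Localization (W.map A.subtype))
      ⟨A.subtype y, ⟨y, y.2, rfl⟩⟩)

/-- A subring `A ⊆ B` is perinormal in `B` at the prime `p` of `A`:  the localization `A_p`
(i.e. the image of `Localization.AtPrime p` in `B_{A∖p}`) is the only local ring `T` between
`A_p` and `B_{A∖p}` whose maximal ideal contracts to `pA_p` and which satisfies going-down
over `A_p`. -/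
def PeriAt {B : Type*} [CommRing B] (A : Subring B) (p : Ideal A) (hp : p.IsPrime) : Prop :=
  haveI := hp
  ∀ (T : Subring (Localization (p.primeCompl.map A.subtype)))
    (hT : (locMap A p.primeCompl).range ≤ T),
    IsLocalRing T →
    (∀ M : Ideal T, M.IsMaximal →
      M.comap ((locMap A p.primeCompl).codRestrict T (fun x => hT ⟨x, rfl⟩)) =
        IsLocalRing.maximalIdeal (Localization.AtPrime p)) →
    GoingDownHom ((locMap A p.primeCompl).codRestrict T (fun x => hT ⟨x, rfl⟩)) →
    T = (locMap A p.primeCompl).range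

/-- A subring `A` of `B` is perinormal in `B`. -/
def PerinormalIn {B : Type*} [CommRing B] (A : Subring B) : Prop :=
  ∀ (p : Ideal A) (hp : p.IsPrime), PeriAt A p hp

/-- An integral domain `R` is perinormal:  every local overring of `R`
(local ring between `R` and its fraction field) satisfying going-down over `R`
is a localization of `R` at a prime ideal. -/
def PerinormalDomain (R : Type*) [CommRing R] [IsDomain R] : Prop :=
  ∀ (T : Subring (FractionRing R)) (hT : (algebraMap R (FractionRing R)).range ≤ T),
    IsLocalRing T →
    GoingDownHom ((algebraMap R (FractionRing R)).codRestrict T (fun x => hT ⟨x, rfl⟩)) →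
    ∃ p : Ideal R, p.IsPrime ∧
      (T : Set (FractionRing R)) =
        {x | ∃ r s : R, s ∉ p ∧
          x * algebraMap R (FractionRing R) s = algebraMap R (FractionRing R) r}

/-- A subring `A ⊆ B` is apparently fragile in `B`: for every ring `C` with `A ⊊ C ⊆ B`
there are a minimal prime `p` of `A` and distinct primes `P, Q` of `C` contracting to `p`. -/
def ApparentlyFragile {B : Type*} [CommRing B] (A : Subring B) : Prop :=
  ∀ (C : Subring B) (hAC : A ≤ C), A ≠ C →
    ∃ p ∈ minimalPrimes A, ∃ P Q : Ideal C, P.IsPrime ∧ Q.IsPrime ∧ P ≠ Q ∧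
      P.comap (Subring.inclusion hAC) = p ∧ Q.comap (Subring.inclusion hAC) = p

/-- A subring `A ⊆ B` is fragile in `B`: for every prime `P` of `A`, the extension
`A_P ⊆ B_{A∖P}` is apparently fragile. -/
def Fragile {B : Type*} [CommRing B] (A : Subring B) : Prop :=
  ∀ (P : Ideal A) (hP : P.IsPrime),
    haveI := hP
    ApparentlyFragile (locMap A P.primeCompl).range

/-- A subring `A ⊆ B` is globally fragile in `B`: for every multiplicative subset `W` of `A`,
the extension `A_W ⊆ B_W` is apparently fragile. -/
def GloballyFragile {B : Type*} [CommRing B] (A : Subring B) : Prop :=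
  ∀ W : Submonoid A, ApparentlyFragile (locMap A W).range

/-- An integral domain `S` is a generalized Krull domain: (i) `S` is the intersection of its
localizations at height-one primes (inside its fraction field), (ii) every nonzero element lies
in only finitely many height-one primes, and (iii) the localization at every height-one prime
is a valuation ring. -/
def IsGenKrull (S : Type*) [CommRing S] [IsDomain S] : Prop :=
  (∀ x : FractionRing S,
      (∀ (p : Ideal S) (hp : p.IsPrime), Order.height (⟨p, hp⟩ : PrimeSpectrum S) = 1 →
        ∃ a s : S, s ∉ p ∧ x * algebraMap S (FractionRing S) s = algebraMap S (FractionRing S) a) →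
      ∃ r : S, algebraMap S (FractionRing S) r = x) ∧
  (∀ s : S, s ≠ 0 →
      {p : Ideal S | ∃ hp : p.IsPrime, Order.height (⟨p, hp⟩ : PrimeSpectrum S) = 1 ∧ s ∈ p}.Finite) ∧
  (∀ (p : Ideal S) (hp : p.IsPrime), Order.height (⟨p, hp⟩ : PrimeSpectrum S) = 1 →
      haveI := hp
      ValuationRing (Localization.AtPrime p))

/-- A prime ideal `Q` has height one. -/
def HeightOne {S : Type*} [CommRing S] (Q : Ideal S) : Prop :=
  ∃ hQ : Q.IsPrime, Order.height (⟨Q, hQ⟩ : PrimeSpectrum S) = 1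


section AuxFragileA
variable {B : Type*} [CommRing B] {A : Subring B}

lemma aux_int (hint : Algebra.IsIntegral A B) (C : Subring B) (hAC : A ≤ C) :
    Algebra.IsIntegral C B := by
  constructor
  intro b
  obtain ⟨P, hPmonic, hPeval⟩ := hint.isIntegral b
  refine ⟨P.map (Subring.inclusion hAC), hPmonic.map _, ?_⟩
  rw [show (algebraMap C B) = C.subtype from rfl, Polynomial.eval₂_map]
  exact hPeval

lemma aux_lift (hint : Algebra.IsIntegral A B) (C : Subring B) (hAC : A ≤ C)
    (P : Ideal C) (hP : P.IsPrime) :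
    ∃ P' : Ideal B, P'.IsPrime ∧ P'.comap C.subtype = P := by
  haveI := aux_int hint C hAC
  haveI := hP
  obtain ⟨Q, -, hQp, hQc⟩ := Ideal.exists_ideal_over_prime_of_isIntegral (R := C) P ⊥
    (by intro x hx
        have h0 : (x : B) = 0 := hx
        have : x = 0 := Subtype.ext h0
        simp [this])
  exact ⟨Q, hQp, hQc⟩

/-- if two distinct primes of an intermediate ring lie over a minimal prime q, then q = p. -/
lemma aux_qp (hint : Algebra.IsIntegral A B) {p : Ideal A}
    (huniq : ∀ q ∈ minimalPrimes A, q ≠ p →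
      ∃! Q : Ideal B, Q.IsPrime ∧ Q.comap A.subtype = q)
    (C : Subring B) (hAC : A ≤ C) (q : Ideal A) (hq : q ∈ minimalPrimes A)
    (P Q : Ideal C) (hP : P.IsPrime) (hQ : Q.IsPrime) (hPQ : P ≠ Q)
    (hPc : P.comap (Subring.inclusion hAC) = q) (hQc : Q.comap (Subring.inclusion hAC) = q) :
    q = p ∧ (∀ x : C, (x : B) ∈ Ideal.map A.subtype q → x ∈ P)
          ∧ (∀ x : C, (x : B) ∈ Ideal.map A.subtype q → x ∈ Q) := by
  obtain ⟨P', hP'p, hP'c⟩ := aux_lift hint C hAC P hP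
  obtain ⟨Q', hQ'p, hQ'c⟩ := aux_lift hint C hAC Q hQ
  have hcomp : ∀ (J : Ideal B), J.comap A.subtype
      = (J.comap C.subtype).comap (Subring.inclusion hAC) := by
    intro J
    rw [Ideal.comap_comap]
    rfl
  have hP'A : P'.comap A.subtype = q := by rw [hcomp, hP'c, hPc]
  have hQ'A : Q'.comap A.subtype = q := by rw [hcomp, hQ'c, hQc]
  have hne : P' ≠ Q' := by
    intro h; apply hPQ; rw [← hP'c, ← hQ'c, h]
  have hqp : q = p := by
    by_contra hqnp
    obtain ⟨U, -, hUuniq⟩ := huniq q hq hqnp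
    exact hne ((hUuniq P' ⟨hP'p, hP'A⟩).trans (hUuniq Q' ⟨hQ'p, hQ'A⟩).symm)
  refine ⟨hqp, ?_, ?_⟩
  · intro x hx
    have hqP' : Ideal.map A.subtype q ≤ P' := Ideal.map_le_iff_le_comap.mpr (le_of_eq hP'A.symm)
    have : (x : B) ∈ P' := hqP' hx
    rw [← hP'c]; exact this
  · intro x hx
    have hqQ' : Ideal.map A.subtype q ≤ Q' := Ideal.map_le_iff_le_comap.mpr (le_of_eq hQ'A.symm)
    have : (x : B) ∈ Q' := hqQ' hx
    rw [← hQ'c]; exact this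

end AuxFragileA

section AuxFragileLoc
variable {B : Type*} [CommRing B] (A : Subring B) (W : Submonoid A)

lemma locMap_mk'_spec (a : A) (w : W) :
    locMap A W (IsLocalization.mk' (Localization W) a w)
      * algebraMap B (Localization (W.map A.subtype)) ((w : A) : B)
    = algebraMap B (Localization (W.map A.subtype)) ((a : A) : B) := by
  have h := (IsLocalization.lift_mk'_spec (S := Localization W)
    (g := (algebraMap B (Localization (W.map A.subtype))).comp A.subtype)
    (fun y => IsLocalization.map_units (M := W.map A.subtype) (Localization (W.map A.subtype))
      ⟨A.subtype y, ⟨y, y.2, rfl⟩⟩)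
    a (locMap A W (IsLocalization.mk' (Localization W) a w)) w).mp rfl
  rw [show locMap A W (IsLocalization.mk' (Localization W) a w)
      * algebraMap B (Localization (W.map A.subtype)) ((w : A) : B)
    = algebraMap B (Localization (W.map A.subtype)) ((w : A) : B)
      * locMap A W (IsLocalization.mk' (Localization W) a w) from mul_comm _ _]
  exact h.symm

lemma mem_locMap_range (x : Localization (W.map A.subtype)) :
    x ∈ (locMap A W).range ↔ ∃ (a : A) (w : W),
      x * algebraMap B (Localization (W.map A.subtype)) ((w : A) : B)
        = algebraMap B (Localization (W.map A.subtype)) ((a : A) : B) := by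
  constructor
  · rintro ⟨y, rfl⟩
    obtain ⟨⟨a, w⟩, rfl⟩ := IsLocalization.mk'_surjective W y
    exact ⟨a, w, locMap_mk'_spec A W a w⟩
  · rintro ⟨a, w, hx⟩
    refine ⟨IsLocalization.mk' (Localization W) a w, ?_⟩
    have h1 := locMap_mk'_spec A W a w
    have hu : IsUnit (algebraMap B (Localization (W.map A.subtype)) ((w : A) : B)) :=
      IsLocalization.map_units (M := W.map A.subtype) _ ⟨((w : A) : B), ⟨(w : A), w.2, rfl⟩⟩
    exact hu.mul_right_cancel (h1.trans hx.symm)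

/-- the natural map `A → (locMap A W).range`. -/
noncomputable def psiA : A →+* (locMap A W).range :=
  ((algebraMap B (Localization (W.map A.subtype))).comp A.subtype).codRestrict
    (locMap A W).range
    (fun a => (mem_locMap_range A W _).mpr ⟨a, 1, by simp⟩)

lemma isLocalization_psiA :
    @IsLocalization A _ W (locMap A W).range _ (psiA A W).toAlgebra := by
  letI : Algebra A (locMap A W).range := (psiA A W).toAlgebra
  refine ⟨?_, ?_, ?_⟩
  · intro w
    have h1 := locMap_mk'_spec A W 1 w
    refine IsUnit.of_mul_eq_one ⟨locMap A W (IsLocalization.mk' (Localization W) 1 w),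
      ⟨_, rfl⟩⟩ ?_
    apply Subtype.ext
    show algebraMap B (Localization (W.map A.subtype)) ((w : A) : B)
        * locMap A W (IsLocalization.mk' (Localization W) 1 w) = 1
    rw [mul_comm, h1]
    simp
  · rintro ⟨x, hx⟩
    obtain ⟨a, w, hs⟩ := (mem_locMap_range A W x).mp hx
    exact ⟨⟨a, w⟩, Subtype.ext hs⟩
  · intro a a' he
    have : algebraMap B (Localization (W.map A.subtype)) ((a : A) : B)
        = algebraMap B (Localization (W.map A.subtype)) ((a' : A) : B) :=
      congrArg Subtype.val he
    obtain ⟨u, hu⟩ := (IsLocalization.eq_iff_exists (W.map A.subtype)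
      (Localization (W.map A.subtype))).mp this
    obtain ⟨w0, hw0, hw0e⟩ := u.2
    refine ⟨⟨w0, hw0⟩, Subtype.ext ?_⟩
    push_cast
    rw [show ((w0 : B)) = (u : B) from hw0e]
    exact hu

/-- the natural map `C → Cb` where `C` is the preimage of an intermediate ring `Cb`. -/
noncomputable def psiC (Cb : Subring (Localization (W.map A.subtype))) :
    (Subring.comap (algebraMap B (Localization (W.map A.subtype))) Cb) →+* Cb :=
  ((algebraMap B (Localization (W.map A.subtype))).comp
    (Subring.comap (algebraMap B (Localization (W.map A.subtype))) Cb).subtype).codRestrict Cb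
    (fun c => c.2)

lemma isLocalization_psiC (Cb : Subring (Localization (W.map A.subtype)))
    (hRCb : (locMap A W).range ≤ Cb)
    (hAC : A ≤ Subring.comap (algebraMap B (Localization (W.map A.subtype))) Cb) :
    @IsLocalization _ _ (W.map (Subring.inclusion hAC)) Cb _ (psiC A W Cb).toAlgebra := by
  set L := Localization (W.map A.subtype)
  set h : B →+* L := algebraMap B L
  letI : Algebra (Subring.comap (algebraMap B (Localization (W.map A.subtype))) Cb) Cb :=
    (psiC A W Cb).toAlgebra
  have hmemR : ∀ a : A, h (a : B) ∈ (locMap A W).range := fun a =>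
    (mem_locMap_range A W _).mpr ⟨a, 1, by simp; rfl⟩
  refine ⟨?_, ?_, ?_⟩
  · rintro ⟨y, hy⟩
    obtain ⟨w0, hw0, hw0e⟩ := hy
    have h1 := locMap_mk'_spec A W 1 ⟨w0, hw0⟩
    refine IsUnit.of_mul_eq_one
      ⟨locMap A W (IsLocalization.mk' (Localization W) 1 ⟨w0, hw0⟩), hRCb ⟨_, rfl⟩⟩ ?_
    apply Subtype.ext
    show h ((y : B)) * locMap A W (IsLocalization.mk' (Localization W) 1 ⟨w0, hw0⟩) = 1
    have hyw : (y : B) = ((w0 : A) : B) := by rw [← hw0e]; rfl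
    rw [hyw, mul_comm, h1]
    simp
  · rintro ⟨x, hx⟩
    obtain ⟨⟨b, v⟩, rfl⟩ := IsLocalization.mk'_surjective (W.map A.subtype) x
    obtain ⟨w0, hw0, hw0e⟩ := v.2
    have hvw : ((v : B)) = ((w0 : A) : B) := hw0e.symm
    have hspec := IsLocalization.mk'_spec L b v
    have hbC : h b ∈ Cb := by
      rw [← hspec]
      exact Cb.mul_mem hx (hRCb (by rw [show ((v : B)) = ((w0 : A) : B) from hvw]; exact hmemR w0))
    refine ⟨⟨⟨b, hbC⟩, ⟨Subring.inclusion hAC w0, ⟨w0, hw0, rfl⟩⟩⟩, Subtype.ext ?_⟩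
    show IsLocalization.mk' L b v * h ((Subring.inclusion hAC w0 : B)) = h b
    rw [show ((Subring.inclusion hAC w0 : B)) = ((w0 : A) : B) from rfl, ← hvw]
    exact hspec
  · intro c c' he
    have : h ((c : B)) = h ((c' : B)) := congrArg Subtype.val he
    obtain ⟨u, hu⟩ := (IsLocalization.eq_iff_exists (W.map A.subtype) L).mp this
    obtain ⟨w0, hw0, hw0e⟩ := u.2
    refine ⟨⟨Subring.inclusion hAC w0, ⟨w0, hw0, rfl⟩⟩, Subtype.ext ?_⟩
    show ((Subring.inclusion hAC w0 : B)) * (c : B) = ((Subring.inclusion hAC w0 : B)) * (c' : B)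
    rw [show ((Subring.inclusion hAC w0 : B)) = ((w0 : A) : B) from rfl,
      show ((w0 : A) : B) = (u : B) from hw0e]
    exact hu


end AuxFragileLoc

section AuxFragileMain
variable {B : Type*} [CommRing B] {A : Subring B}

set_option maxHeartbeats 1000000 in
lemma aux_pB (hint : Algebra.IsIntegral A B) (hfrag : ApparentlyFragile A)
    (p : Ideal A) (hp : p ∈ minimalPrimes A)
    (huniq : ∀ q ∈ minimalPrimes A, q ≠ p →
      ∃! Q : Ideal B, Q.IsPrime ∧ Q.comap A.subtype = q) :
    ((p.map A.subtype : Ideal B) : Set B) = (fun x : A => (x : B)) '' (p : Set A) := by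
  haveI hpp : p.IsPrime := hp.1.1
  -- the intermediate ring A + pB
  set pB : Ideal B := p.map A.subtype with hpBdef
  have hC0 : ∃ C0 : Subring B, (C0 : Set B) = {x | ∃ a : A, x - (a : B) ∈ pB} := by
    refine ⟨{ carrier := {x | ∃ a : A, x - (a : B) ∈ pB}
              one_mem' := ⟨1, by simp⟩
              zero_mem' := ⟨0, by simp⟩
              add_mem' := ?_
              mul_mem' := ?_
              neg_mem' := ?_ }, rfl⟩
    · rintro x y ⟨a, ha⟩ ⟨b, hb⟩
      refine ⟨a * b, ?_⟩
      have h1 : x * (y - (b : B)) ∈ pB := pB.mul_mem_left x hb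
      have h2 : (x - (a : B)) * (b : B) ∈ pB := pB.mul_mem_right (b : B) ha
      have := pB.add_mem h1 h2
      convert this using 1; push_cast; ring
    · rintro x y ⟨a, ha⟩ ⟨b, hb⟩
      exact ⟨a + b, by push_cast; have := pB.add_mem ha hb; convert this using 1; ring⟩
    · rintro x ⟨a, ha⟩
      exact ⟨-a, by push_cast; have := pB.neg_mem ha; convert this using 1; ring⟩
  obtain ⟨C0, hC0set⟩ := hC0
  have hAC0 : A ≤ C0 := by
    intro x hx
    have : x ∈ (C0 : Set B) := by rw [hC0set]; exact ⟨⟨x, hx⟩, by simp⟩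
    exact this
  have hpBC0 : ∀ x ∈ pB, x ∈ C0 := by
    intro x hx
    have : x ∈ (C0 : Set B) := by rw [hC0set]; exact ⟨0, by simpa using hx⟩
    exact this
  -- C0 = A
  have hC0A : A = C0 := by
    by_contra hne
    obtain ⟨q, hq, P, Q, hP, hQ, hPQ, hPc, hQc⟩ := hfrag C0 hAC0 hne
    obtain ⟨hqp, hPmem, hQmem⟩ := aux_qp hint huniq C0 hAC0 q hq P Q hP hQ hPQ hPc hQc
    subst hqp
    -- show P = Q
    apply hPQ
    ext ⟨x, hx⟩
    have hx' : ∃ a : A, x - (a : B) ∈ pB := by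
      have hm : x ∈ (C0 : Set B) := hx
      rw [hC0set] at hm
      exact hm
    obtain ⟨a, ha⟩ := hx'
    have key : ∀ (I : Ideal C0), I.IsPrime → (∀ y : C0, (y : B) ∈ pB → y ∈ I) →
        I.comap (Subring.inclusion hAC0) = q → ((⟨x, hx⟩ : C0) ∈ I ↔ a ∈ q) := by
      intro I hI hImem hIc
      have hd : (⟨x, hx⟩ - Subring.inclusion hAC0 a : C0) ∈ I := hImem _ ha
      constructor
      · intro hxI
        have : (Subring.inclusion hAC0 a : C0) ∈ I := by
          have := I.sub_mem hxI hd; simpa using this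
        rw [← hIc]; exact this
      · intro haq
        have : (Subring.inclusion hAC0 a : C0) ∈ I := by rw [← hIc] at haq; exact haq
        have := I.add_mem hd this; simpa using this
    rw [key P hP hPmem hPc, key Q hQ hQmem hQc]
  -- conclude
  apply Set.Subset.antisymm
  · intro x hx
    have hxC0 : x ∈ C0 := hpBC0 x hx
    rw [← hC0A] at hxC0
    obtain ⟨a, haA⟩ : ∃ a : A, (a : B) = x := ⟨⟨x, hxC0⟩, rfl⟩
    obtain ⟨Q0, hQ0p, hQ0c⟩ := aux_lift hint A le_rfl p hpp
    have hpBQ0 : pB ≤ Q0 := Ideal.map_le_iff_le_comap.mpr (le_of_eq hQ0c.symm)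
    have hap : a ∈ p := by
      rw [← hQ0c]
      show (a : B) ∈ Q0
      rw [haA]
      exact hpBQ0 hx
    exact ⟨a, hap, haA⟩
  · rintro y ⟨a, ha, rfl⟩
    exact Ideal.mem_map_of_mem A.subtype ha

end AuxFragileMain

set_option maxHeartbeats 1000000 in
lemma aux_GF {B : Type*} [CommRing B] (A : Subring B)
    (hint : Algebra.IsIntegral A B) (hfrag : ApparentlyFragile A)
    (p : Ideal A) (hp : p ∈ minimalPrimes A)
    (huniq : ∀ q ∈ minimalPrimes A, q ≠ p →
      ∃! Q : Ideal B, Q.IsPrime ∧ Q.comap A.subtype = q)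
    (hpB : ((p.map A.subtype : Ideal B) : Set B) = (fun x : A => (x : B)) '' (p : Set A)) :
    GloballyFragile A := by
  haveI hpp : p.IsPrime := hp.1.1
  intro W Cb hRCb hne
  by_cases hpW : ∃ w : A, w ∈ W ∧ w ∈ p
  · -- a member of W lies in p : then A_W = B_W, contradiction with hne
    obtain ⟨w, hwW, hwp⟩ := hpW
    exfalso
    apply hne
    refine le_antisymm hRCb ?_
    intro x _
    obtain ⟨⟨b, v⟩, rfl⟩ := IsLocalization.mk'_surjective (W.map A.subtype) x
    obtain ⟨w₂, hw₂, hw₂e⟩ := v.2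
    have hbw : b * (w : B) ∈ p.map A.subtype :=
      (p.map A.subtype).mul_mem_left b (Ideal.mem_map_of_mem A.subtype hwp)
    have hmem : b * (w : B) ∈ ((p.map A.subtype : Ideal B) : Set B) := hbw
    rw [hpB] at hmem
    obtain ⟨a, hap, hae⟩ := hmem
    rw [mem_locMap_range]
    refine ⟨a, ⟨w₂, hw₂⟩ * ⟨w, hwW⟩, ?_⟩
    have hspec := IsLocalization.mk'_spec (Localization (W.map A.subtype)) b v
    have hcoe : (((⟨w₂, hw₂⟩ * ⟨w, hwW⟩ : W) : A) : B) = ((w₂ : B)) * ((w : B)) := by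
      push_cast; rfl
    rw [hcoe, map_mul, ← mul_assoc,
      show ((w₂ : B)) = ((v : B)) from hw₂e, hspec, ← map_mul]
    exact congrArg _ hae.symm
  · -- no member of W lies in p
    push_neg at hpW
    set L := Localization (W.map A.subtype) with hLdef
    set h : B →+* L := algebraMap B L with hhdef
    set C : Subring B := Subring.comap h Cb with hCdef
    have hmemR : ∀ a : A, h (a : B) ∈ (locMap A W).range := fun a =>
      (mem_locMap_range A W _).mpr ⟨a, 1, by simp; rfl⟩
    have hAC : A ≤ C := by
      intro x hx
      exact hRCb (hmemR ⟨x, hx⟩)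
    have hAneC : A ≠ C := by
      intro heq
      apply hne
      refine le_antisymm hRCb ?_
      intro x hx
      obtain ⟨⟨b, v⟩, rfl⟩ := IsLocalization.mk'_surjective (W.map A.subtype) x
      obtain ⟨w₂, hw₂, hw₂e⟩ := v.2
      have hspec := IsLocalization.mk'_spec L b v
      have hbC : b ∈ C := by
        show h b ∈ Cb
        rw [← hspec]
        exact Cb.mul_mem hx (hRCb (by
          rw [show ((v : B)) = ((w₂ : A) : B) from hw₂e.symm]; exact hmemR w₂))
      have hbA : b ∈ A := by rw [heq]; exact hbC
      rw [mem_locMap_range]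
      refine ⟨⟨b, hbA⟩, ⟨w₂, hw₂⟩, ?_⟩
      rw [show (((⟨w₂, hw₂⟩ : W) : A) : B) = ((v : B)) from hw₂e]
      exact hspec
    obtain ⟨q, hq, P, Q, hPp, hQp, hPQ, hPc, hQc⟩ := hfrag C hAC hAneC
    obtain ⟨hqp, -, -⟩ := aux_qp hint huniq C hAC q hq P Q hPp hQp hPQ hPc hQc
    subst hqp
    -- localization structures
    letI : Algebra A (locMap A W).range := (psiA A W).toAlgebra
    haveI hlocA : IsLocalization W (locMap A W).range := isLocalization_psiA A W
    letI : Algebra C Cb := (psiC A W Cb).toAlgebra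
    haveI hlocC : IsLocalization (W.map (Subring.inclusion hAC)) Cb :=
      isLocalization_psiC A W Cb hRCb hAC
    have hdisjA : Disjoint (W : Set A) (q : Set A) :=
      Set.disjoint_left.mpr (fun w hwW hwq => hpW w hwW hwq)
    have hdisjC : ∀ (I : Ideal C), I.comap (Subring.inclusion hAC) = q →
        Disjoint ((W.map (Subring.inclusion hAC) : Submonoid C) : Set C) (I : Set C) := by
      intro I hIc
      refine Set.disjoint_left.mpr ?_
      rintro c ⟨w0, hw0, rfl⟩ hcI
      exact hpW w0 hw0 (by rw [← hIc]; exact hcI)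
    -- the minimal prime of the localized ring
    set pbar : Ideal (locMap A W).range := q.map (algebraMap A (locMap A W).range) with hpbar
    have hpbarp : pbar.IsPrime :=
      IsLocalization.isPrime_of_isPrime_disjoint W (locMap A W).range q hpp hdisjA
    have hpbarc : pbar.comap (algebraMap A (locMap A W).range) = q :=
      IsLocalization.comap_map_of_isPrime_disjoint W (locMap A W).range hpp hdisjA
    have hpbarmin : pbar ∈ minimalPrimes (locMap A W).range := by
      refine ⟨⟨hpbarp, bot_le⟩, ?_⟩
      intro y hy hyle
      have hyc : (y.comap (algebraMap A (locMap A W).range)).IsPrime := hy.1.comap _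
      have hycle : y.comap (algebraMap A (locMap A W).range) ≤ q := by
        rw [← hpbarc]; exact Ideal.comap_mono hyle
      have hqley : q ≤ y.comap (algebraMap A (locMap A W).range) := hp.2 ⟨hyc, bot_le⟩ hycle
      have : pbar = y := by
        rw [hpbar, show q = y.comap (algebraMap A (locMap A W).range) from
          (le_antisymm hycle hqley).symm]
        exact IsLocalization.map_comap W (locMap A W).range y
      exact le_of_eq this
    -- primes upstairs
    set Pbar : Ideal Cb := P.map (algebraMap C Cb) with hPbar
    set Qbar : Ideal Cb := Q.map (algebraMap C Cb) with hQbar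
    have hPbarp : Pbar.IsPrime := IsLocalization.isPrime_of_isPrime_disjoint
      (W.map (Subring.inclusion hAC)) Cb P hPp (hdisjC P hPc)
    have hQbarp : Qbar.IsPrime := IsLocalization.isPrime_of_isPrime_disjoint
      (W.map (Subring.inclusion hAC)) Cb Q hQp (hdisjC Q hQc)
    have hPbarc : Pbar.comap (algebraMap C Cb) = P :=
      IsLocalization.comap_map_of_isPrime_disjoint _ _ hPp (hdisjC P hPc)
    have hQbarc : Qbar.comap (algebraMap C Cb) = Q :=
      IsLocalization.comap_map_of_isPrime_disjoint _ _ hQp (hdisjC Q hQc)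
    have hPbarQbar : Pbar ≠ Qbar := fun hEq => hPQ (by rw [← hPbarc, ← hQbarc, hEq])
    have hsq : (Subring.inclusion hRCb).comp (algebraMap A (locMap A W).range)
        = (algebraMap C Cb).comp (Subring.inclusion hAC) := by
      refine RingHom.ext fun a => Subtype.ext ?_
      show h ((a : A) : B) = h ((a : A) : B)
      rfl
    have hkey : ∀ (I : Ideal Cb) (J : Ideal C), I.comap (algebraMap C Cb) = J →
        J.comap (Subring.inclusion hAC) = q →
        I.comap (Subring.inclusion hRCb) = pbar := by
      intro I J hIJ hJq
      have h1 : (I.comap (Subring.inclusion hRCb)).comap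
          (algebraMap A (locMap A W).range) = q := by
        rw [Ideal.comap_comap, hsq, ← Ideal.comap_comap, hIJ, hJq]
      calc I.comap (Subring.inclusion hRCb)
          = ((I.comap (Subring.inclusion hRCb)).comap
              (algebraMap A (locMap A W).range)).map (algebraMap A (locMap A W).range) :=
            (IsLocalization.map_comap W (locMap A W).range _).symm
        _ = pbar := by rw [h1]
    exact ⟨pbar, hpbarmin, Pbar, Qbar, hPbarp, hQbarp, hPbarQbar,
      hkey Pbar P hPbarc hPc, hkey Qbar Q hQbarc hQc⟩


/-- Let `A ⊆ B` be an apparently fragile integral extension, and suppose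
there is a minimal prime `p` of `A` such that only finitely many primes of `B` lie over `p`
and every other minimal prime of `A` has exactly one prime of `B` contracting to it.
Then `pB = p` (i.e. the image of `p` is an ideal of `B`) and `A ⊆ B` is globally fragile. -/
theorem globallyFragile_of_apparentlyFragile {B : Type*} [CommRing B] (A : Subring B)
    (hint : Algebra.IsIntegral A B) (hfrag : ApparentlyFragile A)
    (p : Ideal A) (hp : p ∈ minimalPrimes A)
    (hfin : {Q : Ideal B | Q.IsPrime ∧ Q.comap A.subtype = p}.Finite)
    (huniq : ∀ q ∈ minimalPrimes A, q ≠ p →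
      ∃! Q : Ideal B, Q.IsPrime ∧ Q.comap A.subtype = q) :
    ((p.map A.subtype : Ideal B) : Set B) = (fun x : A => (x : B)) '' (p : Set A) ∧
    GloballyFragile A := by
  have hpB := aux_pB hint hfrag p hp huniq
  exact ⟨hpB, aux_GF A hint hfrag p hp huniq hpB⟩
end

section
/- Let C ⊆ B be an integral extension of commutative rings. Assume either that (1) C is zero-dimensional with only finitely many minimal primes, or that (2) there is a minimal prime p of C such that only finitely many primes of B lie over p and every other minimal prime of C has exactly one prime of B lying over it. Then there exists a ring A with C ⊆ A ⊆ B such that the extension A ⊆ B is globally fragile and such that under the contraction map Spec A → Spec C, every minimal prime of C has exactly one preimage in Spec A. -/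
section Aux

open Ideal

variable {B : Type*} [CommRing B]

/-- Unique lying over at the level of primes of `B`. -/
def ULOat (C A : Subring B) (p : Ideal ↥C) : Prop :=
  ∀ Q₁ Q₂ : Ideal B, Q₁.IsPrime → Q₂.IsPrime → Q₁.comap C.subtype = p →
    Q₂.comap C.subtype = p → Q₁.comap A.subtype = Q₂.comap A.subtype

def ULO (C A : Subring B) : Prop := ∀ p ∈ minimalPrimes ↥C, ULOat C A p

lemma subring_isIntegral {C A : Subring B} (hCA : C ≤ A) (h : Algebra.IsIntegral ↥C B) :
    Algebra.IsIntegral ↥A B := by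
  letI : Algebra ↥C ↥A := (Subring.inclusion hCA).toAlgebra
  haveI : IsScalarTower ↥C ↥A B := IsScalarTower.of_algebraMap_eq (fun c => rfl)
  exact ⟨fun b => (h.isIntegral b).tower_top⟩

lemma exists_prime_over {A : Subring B} (hI : Algebra.IsIntegral ↥A B) (P : Ideal ↥A)
    (hP : P.IsPrime) : ∃ Q : Ideal B, Q.IsPrime ∧ Q.comap A.subtype = P := by
  haveI := hP
  obtain ⟨Q, -, hQp, hQc⟩ := Ideal.exists_ideal_over_prime_of_isIntegral P (⊥ : Ideal B)
    (by intro x hx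
        have h1 : A.subtype x = 0 := hx
        have h2 : x = 0 := Subtype.ext h1
        simp [h2])
  exact ⟨Q, hQp, hQc⟩

lemma exists_maximal_ULO (C : Subring B) :
    ∃ A : Subring B, C ≤ A ∧ ULO C A ∧ ∀ A', C ≤ A' → ULO C A' → A ≤ A' → A' = A := by
  set s : Set (Subring B) := {A | C ≤ A ∧ ULO C A} with hs
  have hCs : C ∈ s := by
    refine ⟨le_rfl, fun p hp Q₁ Q₂ h1 h2 hc1 hc2 => ?_⟩
    rw [hc1, hc2]
  have hchain : ∀ c ⊆ s, IsChain (· ≤ ·) c → ∀ y ∈ c, ∃ ub ∈ s, ∀ z ∈ c, z ≤ ub := by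
    intro c hcs hchain y hy
    haveI : Nonempty c := ⟨⟨y, hy⟩⟩
    have hdir : Directed (· ≤ ·) (fun i : c => (i : Subring B)) :=
      directedOn_iff_directed.mp hchain.directedOn
    refine ⟨⨆ i : c, (i : Subring B), ⟨?_, ?_⟩,
      fun z hz => le_iSup (fun i : c => (i : Subring B)) ⟨z, hz⟩⟩
    · exact le_trans (hcs hy).1 (le_iSup (fun i : c => (i : Subring B)) ⟨y, hy⟩)
    · intro p hp Q₁ Q₂ h1 h2 hc1 hc2
      have key : ∀ (i : c) (x : B), x ∈ (i : Subring B) → (x ∈ Q₁ ↔ x ∈ Q₂) := by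
        intro i x hxi
        have h := (hcs i.2).2 p hp Q₁ Q₂ h1 h2 hc1 hc2
        constructor
        · intro hx
          have hm : (⟨x, hxi⟩ : ↥(i : Subring B)) ∈ Q₁.comap (i : Subring B).subtype := hx
          rw [h] at hm
          exact hm
        · intro hx
          have hm : (⟨x, hxi⟩ : ↥(i : Subring B)) ∈ Q₂.comap (i : Subring B).subtype := hx
          rw [← h] at hm
          exact hm
      ext x
      simp only [Ideal.mem_comap]
      obtain ⟨i, hxi⟩ := (Subring.mem_iSup_of_directed hdir).mp x.2
      exact key i (x : B) hxi
  obtain ⟨A, -, hA⟩ := zorn_le_nonempty₀ s hchain C hCs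
  exact ⟨A, hA.1.1, hA.1.2, fun A' h1 h2 hle => le_antisymm (hA.2 ⟨h1, h2⟩ hle) hle⟩

lemma comap_mem_minimalPrimes {C A : Subring B} (hCA : C ≤ A) (hULO : ULO C A)
    (hintA : Algebra.IsIntegral ↥A B)
    (p : Ideal ↥C) (hp : p ∈ minimalPrimes ↥C)
    (Q : Ideal B) (hQ : Q.IsPrime) (hQc : Q.comap C.subtype = p) :
    (Q.comap A.subtype) ∈ minimalPrimes ↥A := by
  haveI := hQ
  refine ⟨⟨Ideal.IsPrime.comap _, bot_le⟩, ?_⟩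
  rintro r ⟨hr, -⟩ hrm
  haveI := hr
  obtain ⟨m₀, hm₀min, hm₀r⟩ := Ideal.exists_minimalPrimes_le (I := (⊥ : Ideal ↥A)) (J := r) bot_le
  haveI hm₀p : m₀.IsPrime := hm₀min.1.1
  have hm₀C : m₀.comap (Subring.inclusion hCA) = p := by
    have hle : m₀.comap (Subring.inclusion hCA) ≤ p := by
      rw [← hQc]
      intro c hc
      have h1 : Subring.inclusion hCA c ∈ m₀ := hc
      have h2 : Subring.inclusion hCA c ∈ Q.comap A.subtype := hrm (hm₀r h1)
      exact h2
    haveI : (m₀.comap (Subring.inclusion hCA)).IsPrime := Ideal.IsPrime.comap _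
    exact le_antisymm hle (hp.2 ⟨inferInstance, bot_le⟩ hle)
  obtain ⟨Q₀, hQ₀p, hQ₀c⟩ := exists_prime_over hintA m₀ hm₀p
  have hQ₀C : Q₀.comap C.subtype = p := by
    have h3 : (Q₀.comap A.subtype).comap (Subring.inclusion hCA) = Q₀.comap C.subtype := rfl
    rw [← h3, hQ₀c]
    exact hm₀C
  have h4 := hULO p hp Q₀ Q hQ₀p hQ hQ₀C hQc
  rw [← h4, hQ₀c]
  exact hm₀r

variable (A : Subring B) (W : Submonoid ↥A)

lemma locMap_algebraMap (a : ↥A) :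
    locMap A W (algebraMap ↥A (Localization W) a)
      = algebraMap B (Localization (W.map A.subtype)) ↑a :=
  IsLocalization.lift_eq _ a

lemma unit_den (w : W) :
    IsUnit (algebraMap B (Localization (W.map A.subtype)) ((w : ↥A) : B)) :=
  IsLocalization.map_units (M := W.map A.subtype) (Localization (W.map A.subtype))
    ⟨((w : ↥A) : B), ⟨(w : ↥A), w.2, rfl⟩⟩

lemma locMap_mk'_mul (a : ↥A) (w : W) :
    locMap A W (IsLocalization.mk' (Localization W) a w)
        * algebraMap B (Localization (W.map A.subtype)) ((w : ↥A) : B)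
      = algebraMap B (Localization (W.map A.subtype)) ↑a := by
  rw [← locMap_algebraMap A W ((w : ↥A)), ← _root_.map_mul, IsLocalization.mk'_spec,
    locMap_algebraMap]

lemma mem_locMap_range_iff (x : Localization (W.map A.subtype)) :
    x ∈ (locMap A W).range ↔ ∃ (a : ↥A) (w : W),
      x * algebraMap B (Localization (W.map A.subtype)) ((w : ↥A) : B)
        = algebraMap B (Localization (W.map A.subtype)) ↑a := by
  constructor
  · rintro ⟨y, rfl⟩
    obtain ⟨⟨a, w⟩, rfl⟩ := IsLocalization.mk'_surjective W y
    exact ⟨a, w, locMap_mk'_mul A W a w⟩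
  · rintro ⟨a, w, h⟩
    refine ⟨IsLocalization.mk' (Localization W) a w, ?_⟩
    have hu := unit_den A W w
    have h2 := locMap_mk'_mul A W a w
    exact hu.mul_right_cancel (h2.trans h.symm)

lemma algebraMap_mem_locMap_range (a : ↥A) :
    algebraMap B (Localization (W.map A.subtype)) ↑a ∈ (locMap A W).range :=
  ⟨algebraMap ↥A (Localization W) a, locMap_algebraMap A W a⟩

lemma mem_map_iff_rep (Q : Ideal B) (hQ : Q.IsPrime)
    (hdisj : Disjoint ((W.map A.subtype) : Set B) (Q : Set B))
    {x : Localization (W.map A.subtype)} {a : ↥A} {w : W}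
    (hrep : x * algebraMap B (Localization (W.map A.subtype)) ((w : ↥A) : B)
      = algebraMap B (Localization (W.map A.subtype)) ↑a) :
    x ∈ Q.map (algebraMap B (Localization (W.map A.subtype))) ↔ (a : B) ∈ Q := by
  haveI hQL : (Q.map (algebraMap B (Localization (W.map A.subtype)))).IsPrime :=
    IsLocalization.isPrime_of_isPrime_disjoint (W.map A.subtype)
      (Localization (W.map A.subtype)) Q hQ hdisj
  have hcm : (Q.map (algebraMap B (Localization (W.map A.subtype)))).comap
      (algebraMap B (Localization (W.map A.subtype))) = Q :=
    IsLocalization.comap_map_of_isPrime_disjoint (W.map A.subtype)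
      (Localization (W.map A.subtype)) hQ hdisj
  constructor
  · intro hx
    have h1 : algebraMap B (Localization (W.map A.subtype)) ↑a
        ∈ Q.map (algebraMap B (Localization (W.map A.subtype))) := by
      rw [← hrep]; exact Ideal.mul_mem_right _ _ hx
    have h2 : (a : B) ∈ (Q.map (algebraMap B (Localization (W.map A.subtype)))).comap
        (algebraMap B (Localization (W.map A.subtype))) := h1
    rwa [hcm] at h2
  · intro ha
    have h1 : x * algebraMap B (Localization (W.map A.subtype)) ((w : ↥A) : B)
        ∈ Q.map (algebraMap B (Localization (W.map A.subtype))) := by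
      rw [hrep]; exact Ideal.mem_map_of_mem _ ha
    rcases hQL.mem_or_mem h1 with h | h
    · exact h
    · exfalso
      have h2 : ((w : ↥A) : B) ∈ (Q.map (algebraMap B (Localization (W.map A.subtype)))).comap
          (algebraMap B (Localization (W.map A.subtype))) := h
      rw [hcm] at h2
      exact Set.disjoint_left.mp hdisj ⟨(w : ↥A), w.2, rfl⟩ h2

lemma witnessCase (C : Subring B)
    (D : Subring (Localization (W.map A.subtype)))
    (hRD : (locMap A W).range ≤ D)
    (p : Ideal ↥C)
    (Q₁ Q₂ : Ideal B) (h1 : Q₁.IsPrime) (h2 : Q₂.IsPrime)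
    (heqA : Q₁.comap A.subtype = Q₂.comap A.subtype)
    (hmin : (Q₁.comap A.subtype) ∈ minimalPrimes ↥A)
    (hW : ∀ w : W, ((w : ↥A) : B) ∉ Q₁)
    (d : B) (hd : algebraMap B (Localization (W.map A.subtype)) d ∈ D)
    (hd1 : d ∈ Q₁) (hd2 : d ∉ Q₂) :
    ∃ q ∈ minimalPrimes ↥((locMap A W).range), ∃ P Q : Ideal ↥D, P.IsPrime ∧ Q.IsPrime ∧
      P ≠ Q ∧ P.comap (Subring.inclusion hRD) = q ∧ Q.comap (Subring.inclusion hRD) = q := by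
  have hW2 : ∀ w : W, ((w : ↥A) : B) ∉ Q₂ := by
    intro w hw
    have h : (w : ↥A) ∈ Q₂.comap A.subtype := hw
    rw [← heqA] at h
    exact hW w h
  have hdisj1 : Disjoint ((W.map A.subtype) : Set B) (Q₁ : Set B) := by
    rw [Set.disjoint_left]
    rintro _ ⟨w, hwW, rfl⟩ hmem
    exact hW ⟨w, hwW⟩ hmem
  have hdisj2 : Disjoint ((W.map A.subtype) : Set B) (Q₂ : Set B) := by
    rw [Set.disjoint_left]
    rintro _ ⟨w, hwW, rfl⟩ hmem
    exact hW2 ⟨w, hwW⟩ hmem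
  haveI hQ1L : (Q₁.map (algebraMap B (Localization (W.map A.subtype)))).IsPrime :=
    IsLocalization.isPrime_of_isPrime_disjoint (W.map A.subtype) _ Q₁ h1 hdisj1
  haveI hQ2L : (Q₂.map (algebraMap B (Localization (W.map A.subtype)))).IsPrime :=
    IsLocalization.isPrime_of_isPrime_disjoint (W.map A.subtype) _ Q₂ h2 hdisj2
  set Q₁L := Q₁.map (algebraMap B (Localization (W.map A.subtype))) with hQ₁L
  set Q₂L := Q₂.map (algebraMap B (Localization (W.map A.subtype))) with hQ₂L
  set P : Ideal ↥D := Q₁L.comap D.subtype with hP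
  set Q : Ideal ↥D := Q₂L.comap D.subtype with hQ
  set q : Ideal ↥((locMap A W).range) := Q₁L.comap ((locMap A W).range).subtype with hq
  have hrangeQ : ∀ (x : Localization (W.map A.subtype)), x ∈ (locMap A W).range →
      ((x ∈ Q₁L ↔ x ∈ Q₂L)) := by
    intro x hx
    obtain ⟨a, w, hrep⟩ := (mem_locMap_range_iff A W x).mp hx
    rw [hQ₁L, hQ₂L, mem_map_iff_rep A W Q₁ h1 hdisj1 hrep,
      mem_map_iff_rep A W Q₂ h2 hdisj2 hrep]
    constructor
    · intro h
      have h' : a ∈ Q₁.comap A.subtype := h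
      rw [heqA] at h'
      exact h'
    · intro h
      have h' : a ∈ Q₂.comap A.subtype := h
      rw [← heqA] at h'
      exact h'
  refine ⟨q, ?_, P, Q, Ideal.IsPrime.comap _, Ideal.IsPrime.comap _, ?_, rfl, ?_⟩
  · refine ⟨⟨Ideal.IsPrime.comap _, bot_le⟩, ?_⟩
    rintro r ⟨hr, -⟩ hrq
    set f : ↥A →+* ↥((locMap A W).range) :=
      RingHom.codRestrict ((locMap A W).comp (algebraMap ↥A (Localization W)))
        ((locMap A W).range) (fun a => ⟨algebraMap ↥A (Localization W) a, rfl⟩) with hf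
    have fval : ∀ a : ↥A, ((f a : ↥((locMap A W).range)) : Localization (W.map A.subtype))
        = algebraMap B (Localization (W.map A.subtype)) ↑a := fun a => locMap_algebraMap A W a
    have hcomapQ : ∀ a : ↥A, f a ∈ q ↔ (a : B) ∈ Q₁ := by
      intro a
      have h0 : f a ∈ q ↔ ((f a : ↥((locMap A W).range)) : Localization (W.map A.subtype))
          ∈ Q₁L := Iff.rfl
      rw [h0, fval a]
      have hrep : algebraMap B (Localization (W.map A.subtype)) ↑a
          * algebraMap B (Localization (W.map A.subtype)) (((1 : W) : ↥A) : B)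
          = algebraMap B (Localization (W.map A.subtype)) ↑a := by
        norm_num
      rw [hQ₁L, mem_map_iff_rep A W Q₁ h1 hdisj1 hrep]
    have hrA : r.comap f = Q₁.comap A.subtype := by
      have hle : r.comap f ≤ Q₁.comap A.subtype := by
        intro a ha
        have h' : f a ∈ q := hrq ha
        exact (hcomapQ a).mp h'
      haveI : (r.comap f).IsPrime := Ideal.IsPrime.comap _ (hK := hr)
      exact le_antisymm hle (hmin.2 ⟨inferInstance, bot_le⟩ hle)
    intro z hz
    obtain ⟨a, w, hrep⟩ := (mem_locMap_range_iff A W (z : Localization (W.map A.subtype))).mp z.2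
    have haQ : (a : B) ∈ Q₁ := by
      have hx1 : (z : Localization (W.map A.subtype)) ∈ Q₁L := hz
      exact (mem_map_iff_rep A W Q₁ h1 hdisj1 hrep).mp hx1
    have hfa : f a ∈ r := by
      have h' : a ∈ r.comap f := by rw [hrA]; exact haQ
      exact h'
    have hzmul : z * f (w : ↥A) = f a := by
      apply Subtype.ext
      push_cast
      rw [fval, fval]
      exact hrep
    rcases hr.mem_or_mem (show z * f (w : ↥A) ∈ r by rw [hzmul]; exact hfa) with h | h
    · exact h
    · exfalso
      have h' : (w : ↥A) ∈ r.comap f := h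
      rw [hrA] at h'
      exact hW w h'
  · intro hPQ
    have hzP : (⟨algebraMap B (Localization (W.map A.subtype)) d, hd⟩ : ↥D) ∈ P :=
      Ideal.mem_map_of_mem _ hd1
    rw [hPQ] at hzP
    have h' : d ∈ Q₂L.comap (algebraMap B (Localization (W.map A.subtype))) := hzP
    rw [hQ₂L, show (Q₂.map (algebraMap B (Localization (W.map A.subtype)))).comap
      (algebraMap B (Localization (W.map A.subtype))) = Q₂ from
      IsLocalization.comap_map_of_isPrime_disjoint (W.map A.subtype)
      (Localization (W.map A.subtype)) h2 hdisj2] at h'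
    exact hd2 h'
  · ext z
    simp only [Ideal.mem_comap]
    exact (hrangeQ (z : Localization (W.map A.subtype)) z.2).symm


theorem maximal_ULO_globallyFragile {B : Type*} [CommRing B] (C A : Subring B)
    (hint : Algebra.IsIntegral ↥C B) (hCA : C ≤ A) (hULO : ULO C A)
    (hmax : ∀ A', C ≤ A' → ULO C A' → A ≤ A' → A' = A)
    (hRfin : {p : Ideal ↥C | p ∈ minimalPrimes ↥C ∧
      ¬ ∃! Q : Ideal B, Q.IsPrime ∧ Q.comap C.subtype = p}.Finite) :
    GloballyFragile A := by
  classical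
  intro W D hRD hne
  have hintA : Algebra.IsIntegral ↥A B := subring_isIntegral hCA hint
  have hlt : (locMap A W).range < D := lt_of_le_of_ne hRD hne
  obtain ⟨x, hxD, hxR⟩ := SetLike.exists_of_lt hlt
  obtain ⟨⟨b, wbar⟩, hmk⟩ := IsLocalization.mk'_surjective (W.map A.subtype) x
  obtain ⟨w₀, hw₀W, hw₀⟩ := wbar.2
  have hw₀' : ((w₀ : ↥A) : B) = (wbar : B) := hw₀
  have hxspec : x * algebraMap B (Localization (W.map A.subtype)) ((w₀ : ↥A) : B)
      = algebraMap B (Localization (W.map A.subtype)) b := by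
    rw [hw₀', ← hmk]
    exact IsLocalization.mk'_spec _ b wbar
  set D' : Subring B := D.comap (algebraMap B (Localization (W.map A.subtype))) with hD'
  have hAD' : A ≤ D' := by
    intro a ha
    show algebraMap B (Localization (W.map A.subtype)) a ∈ D
    exact hRD (algebraMap_mem_locMap_range A W ⟨a, ha⟩)
  have hbD' : b ∈ D' := by
    show algebraMap B (Localization (W.map A.subtype)) b ∈ D
    rw [← hxspec]
    exact D.mul_mem hxD (hRD (algebraMap_mem_locMap_range A W (w₀ : ↥A)))
  -- the finite set S of troublesome minimal primes meeting W
  set S : Set (Ideal ↥C) := {p | p ∈ minimalPrimes ↥C ∧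
    (¬ ∃! Q : Ideal B, Q.IsPrime ∧ Q.comap C.subtype = p) ∧
    ∃ (w : W) (Q : Ideal B), Q.IsPrime ∧ Q.comap C.subtype = p ∧ ((w : ↥A) : B) ∈ Q} with hSdef
  have hSfin : S.Finite := hRfin.subset (fun p hp => ⟨hp.1, hp.2.1⟩)
  set Fs := hSfin.toFinset with hFs
  have hchoice : ∀ pp : {y // y ∈ Fs}, ∃ (w : W) (Q : Ideal B),
      Q.IsPrime ∧ Q.comap C.subtype = pp.1 ∧ ((w : ↥A) : B) ∈ Q :=
    fun pp => (hSfin.mem_toFinset.mp pp.2).2.2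
  set wf : {y // y ∈ Fs} → W := fun pp => (hchoice pp).choose with hwf
  set wstar : W := ∏ pp ∈ Fs.attach, wf pp with hwstar
  have K1 : ∀ p ∈ S, ∀ Q : Ideal B, Q.IsPrime → Q.comap C.subtype = p →
      ((wstar : ↥A) : B) ∈ Q := by
    intro p hpS Q hQ hQc
    have hpmem : p ∈ Fs := hSfin.mem_toFinset.mpr hpS
    set pp : {y // y ∈ Fs} := ⟨p, hpmem⟩ with hpp
    obtain ⟨Q₀, hQ₀p, hQ₀c, hwQ₀⟩ := (hchoice pp).choose_spec
    have hm := hULO p hpS.1 Q₀ Q hQ₀p hQ hQ₀c hQc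
    have hwQ : ((wf pp : ↥A) : B) ∈ Q := by
      have h' : (wf pp : ↥A) ∈ Q₀.comap A.subtype := hwQ₀
      rw [hm] at h'
      exact h'
    have hsplit : (wf pp) * ∏ y ∈ Fs.attach.erase pp, wf y = wstar :=
      Finset.mul_prod_erase Fs.attach wf (Finset.mem_attach Fs pp)
    have hcoe : ((wstar : ↥A) : B)
        = ((wf pp : ↥A) : B) * (((((∏ y ∈ Fs.attach.erase pp, wf y) : W) : ↥A)) : B) := by
      rw [← hsplit]
      push_cast
      ring
    rw [hcoe]
    exact Ideal.mul_mem_right _ _ hwQ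
  set wB : B := ((wstar : ↥A) : B) with hwB
  have hwBA : wB ∈ A := (wstar : ↥A).2
  rcases Classical.em (∃ p ∈ minimalPrimes ↥C, p ∉ S ∧ ∃ Q₁ Q₂ : Ideal B, Q₁.IsPrime ∧
      Q₂.IsPrime ∧ Q₁.comap C.subtype = p ∧ Q₂.comap C.subtype = p ∧
      Q₁.comap D'.subtype ≠ Q₂.comap D'.subtype) with hwit | hwit
  · obtain ⟨p, hp, hpS, Q₁, Q₂, h1, h2, hc1, hc2, hdiff⟩ := hwit
    have hnu : ¬ ∃! Q : Ideal B, Q.IsPrime ∧ Q.comap C.subtype = p := by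
      intro h
      exact hdiff (by rw [h.unique ⟨h1, hc1⟩ ⟨h2, hc2⟩])
    have heqA : Q₁.comap A.subtype = Q₂.comap A.subtype := hULO p hp Q₁ Q₂ h1 h2 hc1 hc2
    have hWQ₁ : ∀ w : W, ((w : ↥A) : B) ∉ Q₁ := by
      intro w hw
      exact hpS ⟨hp, hnu, w, Q₁, h1, hc1, hw⟩
    have hWQ₂ : ∀ w : W, ((w : ↥A) : B) ∉ Q₂ := by
      intro w hw
      exact hpS ⟨hp, hnu, w, Q₂, h2, hc2, hw⟩
    have hmin : (Q₁.comap A.subtype) ∈ minimalPrimes ↥A :=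
      comap_mem_minimalPrimes hCA hULO hintA p hp Q₁ h1 hc1
    have hy : ∃ y : ↥D', ((y : B) ∈ Q₁ ∧ (y : B) ∉ Q₂) ∨ ((y : B) ∈ Q₂ ∧ (y : B) ∉ Q₁) := by
      by_contra hcon
      push_neg at hcon
      apply hdiff
      ext y
      simp only [Ideal.mem_comap]
      exact ⟨fun h => (hcon y).1 h, fun h => (hcon y).2 h⟩
    obtain ⟨y, hy⟩ := hy
    have hyD : algebraMap B (Localization (W.map A.subtype)) (y : B) ∈ D := y.2
    rcases hy with ⟨hy1, hy2⟩ | ⟨hy1, hy2⟩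
    · exact witnessCase A W C D hRD p Q₁ Q₂ h1 h2 heqA hmin hWQ₁ (y : B) hyD hy1 hy2
    · exact witnessCase A W C D hRD p Q₂ Q₁ h2 h1 heqA.symm (heqA ▸ hmin) hWQ₂
        (y : B) hyD hy1 hy2
  · -- no witness: build H = A + wB·D' and contradict maximality
    exfalso
    push_neg at hwit
    set H : Subring B :=
      { carrier := {z | ∃ a ∈ A, ∃ d ∈ D', z = a + wB * d}
        zero_mem' := ⟨0, A.zero_mem, 0, D'.zero_mem, by ring⟩
        one_mem' := ⟨1, A.one_mem, 0, D'.zero_mem, by ring⟩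
        add_mem' := by
          rintro u v ⟨a, ha, d, hd, rfl⟩ ⟨a', ha', d', hd', rfl⟩
          exact ⟨a + a', A.add_mem ha ha', d + d', D'.add_mem hd hd', by ring⟩
        mul_mem' := by
          rintro u v ⟨a, ha, d, hd, rfl⟩ ⟨a', ha', d', hd', rfl⟩
          refine ⟨a * a', A.mul_mem ha ha',
            a * d' + a' * d + wB * (d * d'), ?_, by ring⟩
          exact D'.add_mem (D'.add_mem (D'.mul_mem (hAD' ha) hd') (D'.mul_mem (hAD' ha') hd))
            (D'.mul_mem (hAD' hwBA) (D'.mul_mem hd hd'))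
        neg_mem' := by
          rintro u ⟨a, ha, d, hd, rfl⟩
          exact ⟨-a, A.neg_mem ha, -d, D'.neg_mem hd, by ring⟩ } with hH
    have hAH : A ≤ H := fun a ha => ⟨a, ha, 0, D'.zero_mem, by ring⟩
    have hCH : C ≤ H := le_trans hCA hAH
    have hHD' : H ≤ D' := by
      rintro z ⟨a, ha, d, hd, rfl⟩
      exact D'.add_mem (hAD' ha) (D'.mul_mem (hAD' hwBA) hd)
    have hULOH : ULO C H := by
      intro p hp Q₁ Q₂ h1 h2 hc1 hc2
      by_cases hpu : ∃! Q : Ideal B, Q.IsPrime ∧ Q.comap C.subtype = p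
      · rw [hpu.unique ⟨h1, hc1⟩ ⟨h2, hc2⟩]
      · by_cases hpS : p ∈ S
        · have hw1 : wB ∈ Q₁ := K1 p hpS Q₁ h1 hc1
          have hw2 : wB ∈ Q₂ := K1 p hpS Q₂ h2 hc2
          have heqA' : Q₁.comap A.subtype = Q₂.comap A.subtype :=
            hULO p hp Q₁ Q₂ h1 h2 hc1 hc2
          ext z
          simp only [Ideal.mem_comap]
          obtain ⟨a, ha, d, hd, hz⟩ := z.2
          have hzz : (H.subtype z : B) = a + wB * d := hz
          rw [hzz]
          rw [Ideal.add_mem_iff_left _ (Ideal.mul_mem_right d _ hw1),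
              Ideal.add_mem_iff_left _ (Ideal.mul_mem_right d _ hw2)]
          constructor
          · intro h
            have h' : (⟨a, ha⟩ : ↥A) ∈ Q₁.comap A.subtype := h
            rw [heqA'] at h'
            exact h'
          · intro h
            have h' : (⟨a, ha⟩ : ↥A) ∈ Q₂.comap A.subtype := h
            rw [← heqA'] at h'
            exact h'
        · have heqD' : Q₁.comap D'.subtype = Q₂.comap D'.subtype :=
            hwit p hp hpS Q₁ Q₂ h1 h2 hc1 hc2
          ext z
          simp only [Ideal.mem_comap]
          constructor
          · intro h
            have h' : (⟨(z : B), hHD' z.2⟩ : ↥D') ∈ Q₁.comap D'.subtype := h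
            rw [heqD'] at h'
            exact h'
          · intro h
            have h' : (⟨(z : B), hHD' z.2⟩ : ↥D') ∈ Q₂.comap D'.subtype := h
            rw [← heqD'] at h'
            exact h'
    have hHA : H = A := hmax H hCH hULOH hAH
    have hwb : wB * b ∈ A := by
      have h' : wB * b ∈ H := ⟨0, A.zero_mem, b, hbD', by ring⟩
      rw [hHA] at h'
      exact h'
    apply hxR
    rw [mem_locMap_range_iff]
    refine ⟨⟨wB * b, hwb⟩, wstar * ⟨w₀, hw₀W⟩, ?_⟩
    have hcoe2 : (((wstar * ⟨w₀, hw₀W⟩ : W) : ↥A) : B) = wB * ((w₀ : ↥A) : B) := by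
      push_cast
      ring
    rw [hcoe2]
    rw [_root_.map_mul, ← mul_assoc, mul_comm x
      (algebraMap B (Localization (W.map A.subtype)) wB), mul_assoc, hxspec,
      ← _root_.map_mul]

end Aux


/-- Let `C ⊆ B` be an integral extension.  If either (1) `C` is
zero-dimensional with finitely many minimal primes, or (2) some minimal prime `p` of `C` has
finitely many primes of `B` over it while every other minimal prime of `C` has exactly one
prime of `B` over it, then there is an intermediate ring `C ⊆ A ⊆ B` such that `A ⊆ B` is
globally fragile and every minimal prime of `C` has exactly one preimage under
`Spec A → Spec C`. -/
theorem exists_globallyFragile_intermediate {B : Type*} [CommRing B] (C : Subring B)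
    (hint : Algebra.IsIntegral C B)
    (hyp : ((∀ P : Ideal C, P.IsPrime → P.IsMaximal) ∧ (minimalPrimes C).Finite) ∨
      (∃ p ∈ minimalPrimes C, {Q : Ideal B | Q.IsPrime ∧ Q.comap C.subtype = p}.Finite ∧
        ∀ q ∈ minimalPrimes C, q ≠ p →
          ∃! Q : Ideal B, Q.IsPrime ∧ Q.comap C.subtype = q)) :
    ∃ A : Subring B, ∃ hCA : C ≤ A, GloballyFragile A ∧
      ∀ p ∈ minimalPrimes C,
        ∃! P : Ideal A, P.IsPrime ∧ P.comap (Subring.inclusion hCA) = p := by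
  classical
  have hRfin : {p : Ideal ↥C | p ∈ minimalPrimes ↥C ∧
      ¬ ∃! Q : Ideal B, Q.IsPrime ∧ Q.comap C.subtype = p}.Finite := by
    rcases hyp with ⟨-, hfin⟩ | ⟨p₀, hp₀, -, huniq⟩
    · exact hfin.subset fun p hp => hp.1
    · refine (Set.finite_singleton p₀).subset ?_
      rintro q ⟨hq, hnu⟩
      by_contra hne
      exact hnu (huniq q hq hne)
  obtain ⟨A, hCA, hULO, hmax⟩ := exists_maximal_ULO C
  refine ⟨A, hCA, maximal_ULO_globallyFragile C A hint hCA hULO hmax hRfin, ?_⟩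
  intro p hp
  haveI hpprime : p.IsPrime := hp.1.1
  have hintA : Algebra.IsIntegral ↥A B := subring_isIntegral hCA hint
  obtain ⟨Q, hQp, hQc⟩ := exists_prime_over hint p hpprime
  refine ⟨Q.comap A.subtype, ⟨Ideal.IsPrime.comap _ (hK := hQp), ?_⟩, ?_⟩
  · exact hQc
  · rintro P ⟨hPp, hPc⟩
    obtain ⟨Q', hQ'p, hQ'c⟩ := exists_prime_over hintA P hPp
    have hQ'C : Q'.comap C.subtype = p := by
      have h3 : (Q'.comap A.subtype).comap (Subring.inclusion hCA) = Q'.comap C.subtype := rfl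
      rw [← h3, hQ'c]
      exact hPc
    have h4 := hULO p hp Q' Q hQ'p hQp hQ'C hQc
    rw [← hQ'c, h4]
end
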